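/- Let p be an odd prime, let q ∈ ℚ_p satisfy |q−1|_p < 1, let f : ℤ_p → ℚ_p be continuous, and let n be a positive integer. Then the sequences N ↦ ((1+q)/(1+q^{p^N})) ∑_{x=0}^{p^N−1} (−1)^x f(x+n) and N ↦ ((1+q)/(1+q^{p^N})) ∑_{x=0}^{p^N−1} (−1)^x f(x) converge in ℚ_p (their limits are I_{−q}(q^{−x}f_n) and I_{−q}(q^{−x}f), since (−q)^x q^{−x} = (−1)^x), and I_{−q}(q^{−x}f_n) + (−1)^{n−1}·I_{−q}(q^{−x}f) = [2]_q·∑_{l=0}^{n−1} (−1)^{n−l−1} f(l), where [2]_q = 1+q. -/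

import Mathlib

open Filter Finset

namespace FermAux


lemma sum_range_mul'' {M : Type*} [AddCommMonoid M] (h : ℕ → M) (a b : ℕ) :
    ∑ x ∈ range (a * b), h x = ∑ i ∈ range a, ∑ j ∈ range b, h (i * b + j) := by
  induction a with
  | zero => simp
  | succ a ih =>
      rw [Nat.succ_mul, Finset.sum_range_add, ih, Finset.sum_range_succ]

variable {p : ℕ} [hpp : Fact (Nat.Prime p)]

noncomputable def S (g : ℤ_[p] → ℚ_[p]) (N : ℕ) : ℚ_[p] :=
  ∑ x ∈ range (p ^ N), (-1) ^ x * g (x : ℤ_[p])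

lemma diff_bound (hp : Odd p) (g : ℤ_[p] → ℚ_[p]) (N : ℕ) {ε : ℝ} (hε : 0 ≤ ε)
    (hN : ∀ a b : ℤ_[p], ‖a - b‖ ≤ (p : ℝ) ^ (-(N : ℤ)) → ‖g a - g b‖ ≤ ε) :
    ‖S g (N + 1) - S g N‖ ≤ ε := by
  classical
  set T : ℕ → ℚ_[p] := fun i => ∑ j ∈ range (p ^ N), (-1) ^ j * g ((i * p ^ N + j : ℕ) : ℤ_[p])
    with hT
  have hodd : Odd (p ^ N) := hp.pow
  have h1 : S g (N + 1) = ∑ i ∈ range p, (-1) ^ i * T i := by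
    rw [S, pow_succ, mul_comm (p ^ N) p, sum_range_mul'']
    refine Finset.sum_congr rfl fun i _ => ?_
    rw [hT, Finset.mul_sum]
    refine Finset.sum_congr rfl fun j _ => ?_
    rw [pow_add, pow_mul']
    rw [hodd.neg_one_pow]
    ring_nf
  have hT0 : T 0 = S g N := by
    simp [hT, S]
  have h2 : S g (N + 1) - S g N = ∑ i ∈ range p, (-1) ^ i * (T i - T 0) := by
    rw [h1, hT0.symm]
    have h3 : ∑ i ∈ range p, (-1 : ℚ_[p]) ^ i = 1 := by
      rw [neg_one_geom_sum, if_neg (Nat.not_even_iff_odd.mpr hp)]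
    calc ∑ i ∈ range p, (-1) ^ i * T i - T 0
        = ∑ i ∈ range p, (-1) ^ i * T i - (∑ i ∈ range p, (-1 : ℚ_[p]) ^ i) * T 0 := by
          rw [h3, one_mul]
      _ = ∑ i ∈ range p, (-1) ^ i * (T i - T 0) := by
          rw [Finset.sum_mul, ← Finset.sum_sub_distrib]
          exact Finset.sum_congr rfl fun i _ => by ring
  rw [h2]
  refine IsUltrametricDist.norm_sum_le_of_forall_le_of_nonneg hε fun i _ => ?_
  have : ‖(-1 : ℚ_[p]) ^ i * (T i - T 0)‖ = ‖T i - T 0‖ := by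
    simp
  rw [this]
  have : T i - T 0 = ∑ j ∈ range (p ^ N),
      (-1) ^ j * (g ((i * p ^ N + j : ℕ) : ℤ_[p]) - g ((j : ℕ) : ℤ_[p])) := by
    rw [hT]
    simp only [zero_mul, zero_add]
    rw [← Finset.sum_sub_distrib]
    exact Finset.sum_congr rfl fun j _ => by ring
  rw [this]
  refine IsUltrametricDist.norm_sum_le_of_forall_le_of_nonneg hε fun j _ => ?_
  have he : ‖(-1 : ℚ_[p]) ^ j * (g ((i * p ^ N + j : ℕ) : ℤ_[p]) - g ((j : ℕ) : ℤ_[p]))‖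
      = ‖g ((i * p ^ N + j : ℕ) : ℤ_[p]) - g ((j : ℕ) : ℤ_[p])‖ := by simp
  rw [he]
  refine hN _ _ ?_
  have harg : ((i * p ^ N + j : ℕ) : ℤ_[p]) - ((j : ℕ) : ℤ_[p]) = (i : ℤ_[p]) * (p : ℤ_[p]) ^ N := by
    push_cast; ring
  rw [harg]
  calc ‖(i : ℤ_[p]) * (p : ℤ_[p]) ^ N‖ ≤ 1 * ‖(p : ℤ_[p]) ^ N‖ := by
        rw [norm_mul]
        exact mul_le_mul_of_nonneg_right (PadicInt.norm_le_one _) (norm_nonneg _)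
    _ = (p : ℝ) ^ (-(N : ℤ)) := by rw [one_mul, PadicInt.norm_p_pow]


lemma d_tendsto (hp : Odd p) (g : ℤ_[p] → ℚ_[p]) (hg : Continuous g)
    (S : ℕ → ℚ_[p])
    (hd : ∀ (N : ℕ) (ε : ℝ), 0 ≤ ε →
      (∀ a b : ℤ_[p], ‖a - b‖ ≤ (p : ℝ) ^ (-(N : ℤ)) → ‖g a - g b‖ ≤ ε) →
      ‖S (N + 1) - S N‖ ≤ ε) :
    Tendsto (fun N => S (N + 1) - S N) atTop (nhds 0) := by
  have huc : UniformContinuous g := CompactSpace.uniformContinuous_of_continuous hg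
  rw [NormedAddCommGroup.tendsto_nhds_zero]
  intro ε hε
  obtain ⟨δ, hδ, hδ'⟩ := Metric.uniformContinuous_iff.mp huc (ε / 2) (by linarith)
  have hplt : (1 : ℝ) < p := by exact_mod_cast hpp.out.one_lt
  have htend : Tendsto (fun N : ℕ => (p : ℝ) ^ (-(N : ℤ))) atTop (nhds 0) := by
    have := tendsto_pow_atTop_nhds_zero_of_lt_one (r := (p:ℝ)⁻¹) (by positivity)
      (inv_lt_one_of_one_lt₀ hplt)
    refine this.congr fun N => ?_
    rw [inv_pow, ← zpow_natCast, ← zpow_neg]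
  filter_upwards [htend.eventually (gt_mem_nhds hδ)] with N hN
  have : ‖S (N + 1) - S N‖ ≤ ε / 2 := by
    refine hd N (ε / 2) (by linarith) fun a b hab => ?_
    have : dist a b < δ := by
      rw [dist_eq_norm]; exact lt_of_le_of_lt hab hN
    have := hδ' this
    rw [dist_eq_norm] at this
    linarith
  linarith



variable {p : ℕ} [hpp : Fact (Nat.Prime p)]

lemma exists_lim (S : ℕ → ℚ_[p])
    (h : Tendsto (fun N => S (N + 1) - S N) atTop (nhds 0)) :
    ∃ L, Tendsto S atTop (nhds L) := by
  have hs : Summable (fun N => S (N + 1) - S N) :=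
    NonarchimedeanAddGroup.summable_of_tendsto_cofinite_zero
      (by rwa [Nat.cofinite_eq_atTop])
  have ht := hs.hasSum.tendsto_sum_nat
  refine ⟨(∑' N, (S (N + 1) - S N)) + S 0, ?_⟩
  have := ht.add_const (S 0)
  refine this.congr fun N => ?_
  rw [Finset.sum_range_sub, sub_add_cancel]

-- shift lemma
lemma shift_lim (hp : Odd p) (g : ℤ_[p] → ℚ_[p]) (hg : Continuous g) (l : ℚ_[p])
    (h : Tendsto (fun N => ∑ x ∈ range (p ^ N), (-1) ^ x * g (x : ℤ_[p])) atTop (nhds l)) :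
    Tendsto (fun N => ∑ x ∈ range (p ^ N), (-1) ^ x * g ((x : ℤ_[p]) + 1)) atTop
      (nhds (2 * g 0 - l)) := by
  have key : ∀ N : ℕ, ∑ x ∈ range (p ^ N), (-1) ^ x * g ((x : ℤ_[p]) + 1)
      = g ((p : ℤ_[p]) ^ N) + g 0 - ∑ x ∈ range (p ^ N), (-1) ^ x * g (x : ℤ_[p]) := by
    intro N
    set F : ℕ → ℚ_[p] := fun y => (-1) ^ y * g (y : ℤ_[p]) with hF
    have h1 : ∀ x : ℕ, (-1 : ℚ_[p]) ^ x * g ((x : ℤ_[p]) + 1) = -F (x + 1) := by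
      intro x
      rw [hF]
      push_cast
      ring
    rw [Finset.sum_congr rfl fun x _ => h1 x, Finset.sum_neg_distrib]
    have h2 : ∑ x ∈ range (p ^ N), F (x + 1)
        = (∑ x ∈ range (p ^ N), F x) + F (p ^ N) - F 0 := by
      rw [← Finset.sum_range_succ, Finset.sum_range_succ' F (p ^ N)]
      ring
    have h3 : F (p ^ N) = -g ((p : ℤ_[p]) ^ N) := by
      rw [hF]
      simp only [(hp.pow).neg_one_pow]
      push_cast
      ring
    have h4 : F 0 = g 0 := by simp [hF]
    rw [h2, h3, h4]
    ring
  have hpn : Tendsto (fun N : ℕ => ((p : ℤ_[p])) ^ N) atTop (nhds 0) :=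
    tendsto_pow_atTop_nhds_zero_of_norm_lt_one
      (by rw [PadicInt.norm_p]
          exact inv_lt_one_of_one_lt₀ (by exact_mod_cast hpp.out.one_lt))
  have hgc : Tendsto (fun N : ℕ => g ((p : ℤ_[p]) ^ N)) atTop (nhds (g 0)) :=
    (hg.tendsto 0).comp hpn
  have := (hgc.add_const (g 0)).sub h
  have h5 : g 0 + g 0 - l = 2 * g 0 - l := by ring
  rw [h5] at this
  exact this.congr fun N => (key N).symm



variable {p : ℕ} [hpp : Fact (Nat.Prime p)]

lemma step_pow (r : ℚ_[p]) (hr : ‖r - 1‖ ≤ (p : ℝ)⁻¹) :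
    ‖r ^ p - 1‖ ≤ (p : ℝ)⁻¹ * ‖r - 1‖ := by
  have hp1 : 1 < p := hpp.out.one_lt
  have hpinv : (p : ℝ)⁻¹ ≤ 1 := by
    rw [inv_le_one_iff₀]; right; exact_mod_cast hp1.le
  have hr1 : ‖r - 1‖ ≤ 1 := hr.trans hpinv
  have hexp : r ^ p - 1 = ∑ k ∈ range p, (r - 1) ^ (k + 1) * (p.choose (k + 1) : ℚ_[p]) := by
    have := add_pow (r - 1) 1 p
    simp only [one_pow, mul_one, sub_add_cancel] at this
    rw [this, Finset.sum_range_succ' (fun k => (r - 1) ^ k * (p.choose k : ℚ_[p])) p]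
    simp
  rw [hexp]
  refine IsUltrametricDist.norm_sum_le_of_forall_le_of_nonneg
    (by positivity) fun k hk => ?_
  rw [norm_mul, norm_pow]
  rcases eq_or_lt_of_le (Nat.succ_le_of_lt (Finset.mem_range.mp hk)) with hkp | hkp
  · -- k + 1 = p
    rw [(by omega : k + 1 = p), Nat.choose_self]
    simp only [Nat.cast_one, norm_one, mul_one]
    calc ‖r - 1‖ ^ p = ‖r - 1‖ ^ (p - 1) * ‖r - 1‖ := by
          rw [← pow_succ, (by omega : p - 1 + 1 = p)]
      _ ≤ (p : ℝ)⁻¹ * ‖r - 1‖ := by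
          refine mul_le_mul_of_nonneg_right ?_ (norm_nonneg _)
          calc ‖r - 1‖ ^ (p - 1) ≤ ‖r - 1‖ := by
                refine pow_le_of_le_one (norm_nonneg _) hr1 ?_
                omega
            _ ≤ (p : ℝ)⁻¹ := hr
  · -- k + 1 < p
    have hdw : (p : ℤ) ∣ (p.choose (k + 1) : ℤ) := by
      exact_mod_cast Nat.Prime.dvd_choose_self hpp.out (Nat.succ_ne_zero k) hkp
    have hnorm : ‖((p.choose (k + 1) : ℤ) : ℚ_[p])‖ < 1 :=
      Padic.norm_intCast_lt_one_iff.mpr hdw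
    have hnorm' : ‖((p.choose (k + 1) : ℤ) : ℚ_[p])‖ ≤ (p : ℝ)⁻¹ := by
      have := (Padic.norm_le_pow_iff_norm_lt_pow_add_one
        ((p.choose (k + 1) : ℤ) : ℚ_[p]) (-1)).mpr (by simpa using hnorm)
      simpa using this
    have hc : ((p.choose (k + 1) : ℕ) : ℚ_[p]) = ((p.choose (k + 1) : ℤ) : ℚ_[p]) := by
      push_cast; ring
    rw [hc]
    calc ‖r - 1‖ ^ (k + 1) * ‖((p.choose (k + 1) : ℤ) : ℚ_[p])‖
        ≤ ‖r - 1‖ * (p : ℝ)⁻¹ := by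
          refine mul_le_mul ?_ hnorm' (norm_nonneg _) (norm_nonneg _)
          exact pow_le_of_le_one (norm_nonneg _) hr1 (Nat.succ_ne_zero k)
      _ = (p : ℝ)⁻¹ * ‖r - 1‖ := mul_comm _ _

lemma q_pow_bound (q : ℚ_[p]) (hq : ‖q - 1‖ ≤ (p : ℝ)⁻¹) (N : ℕ) :
    ‖q ^ p ^ N - 1‖ ≤ (p : ℝ)⁻¹ ^ N * ‖q - 1‖ := by
  induction N with
  | zero => simpa using le_refl _
  | succ N ih =>
      have hpinv : (p : ℝ)⁻¹ ≤ 1 := by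
        rw [inv_le_one_iff₀]; right; exact_mod_cast hpp.out.one_lt.le
      have hpinv0 : (0:ℝ) ≤ (p : ℝ)⁻¹ := by positivity
      have hrn : ‖q ^ p ^ N - 1‖ ≤ (p : ℝ)⁻¹ := by
        refine ih.trans ?_
        calc (p : ℝ)⁻¹ ^ N * ‖q - 1‖ ≤ 1 * (p : ℝ)⁻¹ :=
              mul_le_mul (pow_le_one₀ hpinv0 hpinv) hq (norm_nonneg _) (by norm_num)
          _ = (p : ℝ)⁻¹ := one_mul _
      have := step_pow (q ^ p ^ N) hrn
      rw [← pow_mul, ← pow_succ] at this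
      refine this.trans ?_
      rw [pow_succ]
      calc (p:ℝ)⁻¹ * ‖q ^ p ^ N - 1‖ ≤ (p:ℝ)⁻¹ * ((p : ℝ)⁻¹ ^ N * ‖q - 1‖) :=
            mul_le_mul_of_nonneg_left ih hpinv0
        _ = (p : ℝ)⁻¹ ^ N * (p:ℝ)⁻¹ * ‖q - 1‖ := by ring

lemma prefactor_tendsto (q : ℚ_[p]) (hq : ‖q - 1‖ < 1) :
    Tendsto (fun N : ℕ => (1 + q) / (1 + q ^ p ^ N)) atTop (nhds ((1 + q) / 2)) := by
  have hq' : ‖q - 1‖ ≤ (p : ℝ)⁻¹ := by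
    have := (Padic.norm_le_pow_iff_norm_lt_pow_add_one (q - 1) (-1)).mpr (by simpa using hq)
    simpa using this
  have hplt : (1 : ℝ) < p := by exact_mod_cast hpp.out.one_lt
  have hgeo : Tendsto (fun N : ℕ => (p : ℝ)⁻¹ ^ N * ‖q - 1‖) atTop (nhds 0) := by
    have := (tendsto_pow_atTop_nhds_zero_of_lt_one (r := (p:ℝ)⁻¹) (by positivity)
      (inv_lt_one_of_one_lt₀ hplt)).mul_const ‖q - 1‖
    simpa using this
  have hqn : Tendsto (fun N : ℕ => q ^ p ^ N) atTop (nhds 1) := by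
    rw [tendsto_iff_norm_sub_tendsto_zero]
    exact squeeze_zero (fun N => norm_nonneg _) (q_pow_bound q hq') hgeo
  have hden : Tendsto (fun N : ℕ => 1 + q ^ p ^ N) atTop (nhds 2) := by
    have := (tendsto_const_nhds (x := (1:ℚ_[p])) (f := atTop (α := ℕ))).add hqn
    norm_num at this
    exact this
  exact (tendsto_const_nhds (x := 1 + q) (f := atTop)).div hden (by norm_num)

end FermAux

/-- Proposition 5: for continuous `f : ℤ_p → ℚ_p` and `n ≥ 1`, the fermionic Riemann sums
with weight `(-1)^x = (-q)^x q^{-x}` for `f_n(x) = f(x+n)` and for `f` converge to limits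
`I_{-q}(q^{-x} f_n)` and `I_{-q}(q^{-x} f)`, and
`I_{-q}(q^{-x} f_n) + (-1)^{n-1} I_{-q}(q^{-x} f) = [2]_q ∑_{l=0}^{n-1} (-1)^{n-l-1} f(l)`. -/
theorem fermionic_twisted_integral_iterated (p : ℕ) [Fact (Nat.Prime p)] (hp : Odd p)
    (q : ℚ_[p]) (hq : ‖q - 1‖ < 1) (f : ℤ_[p] → ℚ_[p]) (hf : Continuous f)
    (n : ℕ) (hn : 0 < n) :
    ∃ Iₙ I₀ : ℚ_[p],
      Filter.Tendsto
        (fun N : ℕ => ((1 + q) / (1 + q ^ p ^ N)) *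
          ∑ x ∈ Finset.range (p ^ N), (-1) ^ x * f ((x : ℤ_[p]) + (n : ℤ_[p])))
        Filter.atTop (nhds Iₙ) ∧
      Filter.Tendsto
        (fun N : ℕ => ((1 + q) / (1 + q ^ p ^ N)) *
          ∑ x ∈ Finset.range (p ^ N), (-1) ^ x * f (x : ℤ_[p]))
        Filter.atTop (nhds I₀) ∧
      Iₙ + (-1) ^ (n - 1) * I₀ =
        (1 + q) * ∑ l ∈ Finset.range n, (-1) ^ (n - 1 - l) * f (l : ℤ_[p]) := by
  classical
  open Filter Finset FermAux in
  have hconv : ∀ g : ℤ_[p] → ℚ_[p], Continuous g →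
      ∃ L, Tendsto (fun N => ∑ x ∈ range (p ^ N), (-1) ^ x * g (x : ℤ_[p]))
        atTop (nhds L) := by
    intro g hg
    exact exists_lim _ (d_tendsto hp g hg _ (fun N ε hε h => diff_bound hp g N hε h))
  obtain ⟨L₀, hL₀⟩ := hconv f hf
  have main : ∀ m : ℕ,
      Filter.Tendsto (fun N => ∑ x ∈ Finset.range (p ^ N),
          (-1) ^ x * f ((x : ℤ_[p]) + (m : ℤ_[p]))) Filter.atTop
        (nhds ((-1) ^ m * (L₀ - 2 * ∑ j ∈ Finset.range m, (-1) ^ j * f (j : ℤ_[p])))) := by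
    intro m
    induction m with
    | zero => simpa using hL₀
    | succ m ih =>
        have hgm : Continuous (fun z : ℤ_[p] => f (z + (m : ℤ_[p]))) :=
          hf.comp (continuous_id.add continuous_const)
        have hsh := FermAux.shift_lim hp _ hgm _ ih
        have hfun : ∀ N : ℕ, ∑ x ∈ Finset.range (p ^ N),
            (-1 : ℚ_[p]) ^ x * f ((x : ℤ_[p]) + 1 + (m : ℤ_[p]))
            = ∑ x ∈ Finset.range (p ^ N),
            (-1 : ℚ_[p]) ^ x * f ((x : ℤ_[p]) + ((m + 1 : ℕ) : ℤ_[p])) := by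
          intro N
          refine Finset.sum_congr rfl fun x _ => ?_
          congr 1
          congr 1
          push_cast
          ring
        have hval : 2 * f ((0 : ℤ_[p]) + (m : ℤ_[p]))
            - (-1) ^ m * (L₀ - 2 * ∑ j ∈ Finset.range m, (-1) ^ j * f (j : ℤ_[p]))
            = (-1) ^ (m + 1) *
              (L₀ - 2 * ∑ j ∈ Finset.range (m + 1), (-1) ^ j * f (j : ℤ_[p])) := by
          rw [Finset.sum_range_succ, pow_succ, zero_add]
          have key : ((-1 : ℚ_[p]) ^ m) * ((-1 : ℚ_[p]) ^ m) = 1 := by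
            rw [← mul_pow]; norm_num
          linear_combination (-2 : ℚ_[p]) * f (m : ℤ_[p]) * key
        rw [hval] at hsh
        exact hsh.congr hfun
  have hpre := FermAux.prefactor_tendsto q hq
  obtain ⟨m, rfl⟩ : ∃ m, n = m + 1 := ⟨n - 1, by omega⟩
  refine ⟨(1 + q) / 2 * ((-1) ^ (m + 1) *
      (L₀ - 2 * ∑ j ∈ Finset.range (m + 1), (-1) ^ j * f (j : ℤ_[p]))),
    (1 + q) / 2 * L₀, hpre.mul (main (m + 1)), hpre.mul hL₀, ?_⟩
  simp only [Nat.add_sub_cancel]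
  have hrw : ∀ l ∈ Finset.range (m + 1),
      (-1 : ℚ_[p]) ^ (m - l) * f (l : ℤ_[p]) = (-1) ^ m * ((-1) ^ l * f (l : ℤ_[p])) := by
    intro l hl
    have hlm : l ≤ m := by simpa [Nat.lt_succ_iff] using hl
    have h1 : (-1 : ℚ_[p]) ^ (m - l) * (-1) ^ l = (-1) ^ m := by
      rw [← pow_add, Nat.sub_add_cancel hlm]
    have h2 : (-1 : ℚ_[p]) ^ l * (-1) ^ l = 1 := by rw [← mul_pow]; norm_num
    have h3 : (-1 : ℚ_[p]) ^ m * (-1) ^ l = (-1) ^ (m - l) := by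
      rw [← h1, mul_assoc, h2, mul_one]
    rw [← h3]; ring
  rw [Finset.sum_congr rfl hrw, ← Finset.mul_sum]
  have hd : (1 + q) / 2 * 2 = 1 + q := div_mul_cancel₀ _ (two_ne_zero)
  rw [pow_succ]
  linear_combination ((-1 : ℚ_[p]) ^ m * ∑ l ∈ Finset.range (m + 1),
    (-1 : ℚ_[p]) ^ l * f (l : ℤ_[p])) * hd
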